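/- Suppose s, μ̂ : [0,∞) → ℝ are differentiable with s(t) > 0 for all t in an interval, ṡ = Δf - μ̂ - k·s, μ̂' = max(Ψ(s),0)/ρ where |Δf(t)| ≤ μ. Then the function V'(t) = |s(t)| + μ̂(t)/k satisfies D⁺V'(t) ≤ -k·V'(t) + σ with σ = μ + 1/(kρ), on that interval. -/

import Mathlib

open Filter

theorem dini_of_trajectory (φ k ρ μ : ℝ) (hφ : 0 < φ) (hk : 0 < k) (hρ : 0 < ρ)
    (hμ : 0 ≤ μ) (I : Set ℝ) (Δf s μhat : ℝ → ℝ)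
    (hΔf : ∀ t, |Δf t| ≤ μ)
    (hspos : ∀ t ∈ I, 0 < s t)
    (hs : ∀ t ∈ I, HasDerivAt s (Δf t - μhat t * Real.sign (s t) - k * s t) t)
    (hμhat : ∀ t ∈ I,
      HasDerivAt μhat (max (1 - 2 * φ ^ 2 / (|s t| + φ) ^ 2) 0 / ρ) t) :
    ∀ t ∈ I,
      Filter.limsup
          (fun h : ℝ => ((|s (t + h)| + μhat (t + h) / k) - (|s t| + μhat t / k)) / h)
          (nhdsWithin 0 (Set.Ioi 0))
        ≤ -k * (|s t| + μhat t / k) + (μ + 1 / (k * ρ)) := by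
  intro t ht
  set V : ℝ → ℝ := fun τ => |s τ| + μhat τ / k with hVdef
  set D : ℝ := (Δf t - μhat t * Real.sign (s t) - k * s t)
      + (max (1 - 2 * φ ^ 2 / (|s t| + φ) ^ 2) 0 / ρ) / k with hDdef
  have hst := hspos t ht
  have hsd := hs t ht
  have habs : (fun τ => |s τ|) =ᶠ[nhds t] s := by
    have hev : ∀ᶠ τ in nhds t, 0 < s τ :=
      hsd.continuousAt.eventually_mem (Ioi_mem_nhds hst)
    filter_upwards [hev] with τ hτ using abs_of_pos hτ
  have hsd' : HasDerivAt (fun τ => |s τ|)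
      (Δf t - μhat t * Real.sign (s t) - k * s t) t :=
    hsd.congr_of_eventuallyEq habs
  have hD : HasDerivAt V D t := hsd'.add ((hμhat t ht).div_const k)
  have hslope := hasDerivAt_iff_tendsto_slope.mp hD
  have hmap : Tendsto (fun h : ℝ => t + h) (nhdsWithin 0 (Set.Ioi 0))
      (nhdsWithin t {t}ᶜ) := by
    apply tendsto_nhdsWithin_of_tendsto_nhds_of_eventually_within
    · have : Tendsto (fun h : ℝ => t + h) (nhds 0) (nhds (t + 0)) :=
        (continuous_const.add continuous_id).tendsto 0
      simpa using this.mono_left nhdsWithin_le_nhds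
    · filter_upwards [self_mem_nhdsWithin] with h hh
      simp only [Set.mem_compl_iff, Set.mem_singleton_iff]
      intro hcon
      exact (ne_of_gt (Set.mem_Ioi.mp hh)) (by linarith)
  have htend : Tendsto
      (fun h : ℝ => ((|s (t + h)| + μhat (t + h) / k) - (|s t| + μhat t / k)) / h)
      (nhdsWithin 0 (Set.Ioi 0)) (nhds D) := by
    have := hslope.comp hmap
    refine this.congr' ?_
    filter_upwards [self_mem_nhdsWithin] with h hh
    simp only [Function.comp, slope, vsub_eq_sub, add_sub_cancel_left]
    rw [div_eq_inv_mul]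
    rfl
  have hlim : Filter.limsup
      (fun h : ℝ => ((|s (t + h)| + μhat (t + h) / k) - (|s t| + μhat t / k)) / h)
      (nhdsWithin 0 (Set.Ioi 0)) = D := htend.limsup_eq
  rw [hlim]
  -- now show D ≤ bound
  have hsign : Real.sign (s t) = 1 := Real.sign_of_pos hst
  have hΔ : Δf t ≤ μ := (abs_le.mp (hΔf t)).2
  have hmax : max (1 - 2 * φ ^ 2 / (|s t| + φ) ^ 2) 0 ≤ 1 := by
    apply max_le
    · have h1 : 0 ≤ 2 * φ ^ 2 / (|s t| + φ) ^ 2 := by positivity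
      linarith
    · norm_num
  have hfrac : max (1 - 2 * φ ^ 2 / (|s t| + φ) ^ 2) 0 / ρ / k ≤ 1 / (k * ρ) := by
    rw [div_div, mul_comm ρ k]
    exact div_le_div_of_nonneg_right hmax (by positivity) |>.trans_eq rfl
  have habst : |s t| = s t := abs_of_pos hst
  rw [hDdef, hsign, habst]
  rw [habst] at hfrac
  have : -k * (s t + μhat t / k) = -k * s t - μhat t := by field_simp; ring
  rw [this]
  linarith
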